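/- Let D = diag(d₁,…,dₙ) with dᵢ > 0, α, β, λ > 0 with β > α·d_max², where d_max = maxᵢ dᵢ. If z* is a global minimizer of F(z) = (1/2)‖z−x‖₂² + α·MCP(‖Dz‖₂; β, λ) and ‖Dz*‖₂ > βλ, then z* = x. Conversely, if ‖Dx‖₂ > βλ, then x is the unique global minimizer. -/

import Mathlib

/-- The Minimax Concave Penalty. -/
noncomputable def MCP (β lam t : ℝ) : ℝ :=
  if |t| ≤ β * lam then lam * |t| - t^2 / (2*β) else β * lam^2 / 2

lemma mcp_le (β lam t : ℝ) (hβ : 0 < β) : MCP β lam t ≤ β * lam^2 / 2 := by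
  unfold MCP
  split_ifs with h
  · have h2β : (0:ℝ) < 2*β := by linarith
    have heq : β*lam^2/2 - (lam*|t| - t^2/(2*β)) = (|t| - β*lam)^2/(2*β) := by
      have habs : |t|^2 = t^2 := sq_abs t
      field_simp
      nlinarith [habs]
    have := div_nonneg (sq_nonneg (|t| - β*lam)) (le_of_lt h2β)
    linarith
  · exact le_rfl

lemma mcp_big (β lam t : ℝ) (ht : 0 ≤ t) (h : β * lam < t) : MCP β lam t = β * lam^2 / 2 := by
  unfold MCP
  rw [if_neg]
  rw [abs_of_nonneg ht]
  linarith

lemma mcp_small (β lam t : ℝ) (ht : 0 ≤ t) (h : t ≤ β * lam) :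
    MCP β lam t = lam * t - t^2 / (2*β) := by
  unfold MCP
  rw [abs_of_nonneg ht, if_pos h]

lemma tri_ineq (n : ℕ) (d x z : Fin n → ℝ) :
    Real.sqrt (∑ i, (d i * x i)^2) ≤
      Real.sqrt (∑ i, (d i * z i)^2) + Real.sqrt (∑ i, (d i * (x i - z i))^2) := by
  let u : EuclideanSpace ℝ (Fin n) := WithLp.toLp 2 (fun i => d i * x i)
  let w : EuclideanSpace ℝ (Fin n) := WithLp.toLp 2 (fun i => d i * z i)
  have hu : ‖u‖ = Real.sqrt (∑ i, (d i * x i)^2) := by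
    rw [EuclideanSpace.norm_eq]
    congr 1
    exact Finset.sum_congr rfl fun i _ => by simp [u, Real.norm_eq_abs, mul_pow, sq_abs]
  have hw : ‖w‖ = Real.sqrt (∑ i, (d i * z i)^2) := by
    rw [EuclideanSpace.norm_eq]
    congr 1
    exact Finset.sum_congr rfl fun i _ => by simp [w, Real.norm_eq_abs, mul_pow, sq_abs]
  have huw : ‖u - w‖ = Real.sqrt (∑ i, (d i * (x i - z i))^2) := by
    rw [EuclideanSpace.norm_eq]
    congr 1
    refine Finset.sum_congr rfl fun i _ => ?_
    have : (u - w) i = d i * (x i - z i) := by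
      simp [u, w]; ring
    rw [this, Real.norm_eq_abs, sq_abs]
  have := norm_sub_norm_le u w
  rw [hu, hw, huw] at this
  linarith

/-- For `F(z) = (1/2)‖z−x‖₂² + α·MCP(‖Dz‖₂; β, λ)` with `β > α·d_max²`:
any global minimizer `z*` with `‖Dz*‖₂ > βλ` equals `x`; conversely, if
`‖Dx‖₂ > βλ` then `x` is the unique global minimizer. -/
theorem stmt_8 (n : ℕ) (d x : Fin n → ℝ) (hd : ∀ i, 0 < d i) (α β lam : ℝ)
    (hα : 0 < α) (hβ : 1 < β) (hlam : 0 < lam)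
    (hβd : ∀ i, α * (d i)^2 < β) :
    (∀ zs : Fin n → ℝ,
      (∀ z : Fin n → ℝ,
        (1/2) * (∑ i, (zs i - x i)^2) + α * MCP β lam (Real.sqrt (∑ i, (d i * zs i)^2)) ≤
        (1/2) * (∑ i, (z i - x i)^2) + α * MCP β lam (Real.sqrt (∑ i, (d i * z i)^2))) →
      β * lam < Real.sqrt (∑ i, (d i * zs i)^2) → zs = x) ∧
    (β * lam < Real.sqrt (∑ i, (d i * x i)^2) →
      ∀ z : Fin n → ℝ, z ≠ x →
        (1/2) * (∑ i, (x i - x i)^2) + α * MCP β lam (Real.sqrt (∑ i, (d i * x i)^2)) <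
        (1/2) * (∑ i, (z i - x i)^2) + α * MCP β lam (Real.sqrt (∑ i, (d i * z i)^2))) := by
  have hβ0 : (0:ℝ) < β := by linarith
  constructor
  · -- Part 1
    intro zs hmin hgt
    have hzsN : (0:ℝ) ≤ Real.sqrt (∑ i, (d i * zs i)^2) := Real.sqrt_nonneg _
    have hM1 : MCP β lam (Real.sqrt (∑ i, (d i * zs i)^2)) = β * lam^2 / 2 :=
      mcp_big β lam _ hzsN hgt
    have h := hmin x
    rw [hM1] at h
    have hzero : (∑ i, (x i - x i)^2) = 0 := by simp
    rw [hzero] at h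
    have hM2 : MCP β lam (Real.sqrt (∑ i, (d i * x i)^2)) ≤ β * lam^2 / 2 :=
      mcp_le β lam _ hβ0
    have hsum : (∑ i, (zs i - x i)^2) ≤ 0 := by nlinarith
    have hnn : (0:ℝ) ≤ ∑ i, (zs i - x i)^2 :=
      Finset.sum_nonneg fun i _ => sq_nonneg _
    have hsum0 : (∑ i, (zs i - x i)^2) = 0 := le_antisymm hsum hnn
    funext i
    have := (Finset.sum_eq_zero_iff_of_nonneg (fun i _ => sq_nonneg (zs i - x i))).mp
      hsum0 i (Finset.mem_univ i)
    have : zs i - x i = 0 := by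
      exact pow_eq_zero_iff (by norm_num) |>.mp this
    linarith
  · -- Part 2
    intro hx z hz
    set t := Real.sqrt (∑ i, (d i * z i)^2) with ht_def
    have htN : 0 ≤ t := Real.sqrt_nonneg _
    have hxN : 0 ≤ Real.sqrt (∑ i, (d i * x i)^2) := Real.sqrt_nonneg _
    have hMx : MCP β lam (Real.sqrt (∑ i, (d i * x i)^2)) = β * lam^2 / 2 :=
      mcp_big β lam _ hxN hx
    have hzero : (∑ i, (x i - x i)^2) = 0 := by simp
    rw [hMx, hzero]
    have hposz : 0 < (∑ i, (z i - x i)^2) := by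
      have hne : ∃ i, z i ≠ x i := by
        by_contra hc
        push_neg at hc
        exact hz (funext hc)
      obtain ⟨i, hi⟩ := hne
      refine Finset.sum_pos' (fun j _ => sq_nonneg _) ⟨i, Finset.mem_univ i, ?_⟩
      have : z i - x i ≠ 0 := sub_ne_zero.mpr hi
      positivity
    by_cases hcase : β * lam < t
    · rw [mcp_big β lam t htN hcase]
      linarith
    · push_neg at hcase
      rw [mcp_small β lam t htN hcase]
      -- key chain
      have htri := tri_ineq n d x z
      have hgap : Real.sqrt (∑ i, (d i * x i)^2) - t ≤
          Real.sqrt (∑ i, (d i * (x i - z i))^2) := by linarith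
      have hsq1 : (Real.sqrt (∑ i, (d i * x i)^2) - t)^2 ≤ ∑ i, (d i * (x i - z i))^2 := by
        have hnn2 : 0 ≤ ∑ i, (d i * (x i - z i))^2 :=
          Finset.sum_nonneg fun i _ => sq_nonneg _
        have h1 : 0 ≤ Real.sqrt (∑ i, (d i * x i)^2) - t := by linarith
        calc (Real.sqrt (∑ i, (d i * x i)^2) - t)^2
            ≤ (Real.sqrt (∑ i, (d i * (x i - z i))^2))^2 := by
              apply pow_le_pow_left₀ h1 hgap
          _ = ∑ i, (d i * (x i - z i))^2 := Real.sq_sqrt hnn2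
      have hsq2 : α * (∑ i, (d i * (x i - z i))^2) ≤ β * (∑ i, (x i - z i)^2) := by
        rw [Finset.mul_sum, Finset.mul_sum]
        refine Finset.sum_le_sum fun i _ => ?_
        have h1 := hβd i
        have h2 : (0:ℝ) ≤ (x i - z i)^2 := sq_nonneg _
        nlinarith [sq_nonneg (x i - z i), sq_nonneg (d i * (x i - z i))]
      have hxz : (∑ i, (x i - z i)^2) = (∑ i, (z i - x i)^2) := by
        refine Finset.sum_congr rfl fun i _ => ?_
        ring
      -- strictness: β*lam - t < N x - t
      set Nx := Real.sqrt (∑ i, (d i * x i)^2) with hNx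
      have hstrict : (β * lam - t)^2 < (Nx - t)^2 := by
        have h1 : 0 ≤ β * lam - t := by linarith
        nlinarith
      -- conclude
      have key : α * ((β*lam - t)^2) < β * (∑ i, (z i - x i)^2) := by
        calc α * ((β*lam - t)^2) < α * ((Nx - t)^2) := by
              exact mul_lt_mul_of_pos_left hstrict hα
          _ ≤ α * (∑ i, (d i * (x i - z i))^2) := by
              exact mul_le_mul_of_nonneg_left hsq1 (le_of_lt hα)
          _ ≤ β * (∑ i, (x i - z i)^2) := hsq2
          _ = β * (∑ i, (z i - x i)^2) := by rw [hxz]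
      -- α * (β*lam²/2 - (lam*t - t²/(2β))) = α*(β*lam - t)²/(2β)
      have hfinal : α * (β * lam^2 / 2) - α * (lam * t - t^2 / (2*β)) =
          α * ((β*lam - t)^2) / (2*β) := by
        field_simp
        ring
      have h2β : 0 < 2*β := by linarith
      have key2 : α * ((β*lam - t)^2) / (2*β) < (∑ i, (z i - x i)^2) / 2 := by
        rw [div_lt_div_iff₀ h2β (by norm_num : (0:ℝ) < 2)]
        nlinarith [key]
      linarith [key2]
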